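/- For all a, b ∈ [0,1], the inequality a·log(2a/(a+b)) + b·log(2b/(a+b)) ≥ (a−b)²/(2(a+b)) holds (with the convention 0·log 0 = 0 and the left side interpreted as 0 when a+b = 0). -/

import Mathlib

open Real Set

/-- Auxiliary: `(1-t)e^t ≤ (1+t)e^{-t}` for `t ≥ 0`. -/
lemma aux_exp_ineq (t : ℝ) (ht : 0 ≤ t) :
    (1 - t) * Real.exp t ≤ (1 + t) * Real.exp (-t) := by
  set f : ℝ → ℝ := fun x => (1 + x) * Real.exp (-x) - (1 - x) * Real.exp x with hf
  have hderiv : ∀ x : ℝ, HasDerivAt f (x * Real.exp x - x * Real.exp (-x)) x := by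
    intro x
    have h1 : HasDerivAt (fun x : ℝ => Real.exp (-x)) (-Real.exp (-x)) x := by
      exact ((Real.hasDerivAt_exp (-x)).comp x (hasDerivAt_neg x)).congr_deriv (by ring)
    have h2 := ((hasDerivAt_const x (1:ℝ)).add (hasDerivAt_id x)).mul h1
    have h3 := ((hasDerivAt_const x (1:ℝ)).sub (hasDerivAt_id x)).mul (Real.hasDerivAt_exp x)
    have := h2.sub h3
    refine this.congr_deriv ?_
    simp only [Pi.add_apply, Pi.sub_apply, id_eq]
    ring
  have hmono : MonotoneOn f (Ici (0:ℝ)) := by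
    apply monotoneOn_of_deriv_nonneg (convex_Ici 0)
    · exact (Continuous.continuousOn (by continuity))
    · intro x _
      exact (hderiv x).differentiableAt.differentiableWithinAt
    · intro x hx
      rw [interior_Ici] at hx
      rw [(hderiv x).deriv]
      have hx' : (0:ℝ) < x := hx
      have : Real.exp (-x) ≤ Real.exp x := Real.exp_le_exp.2 (by linarith)
      nlinarith
  have h0 : f 0 = 0 := by simp [hf]
  have := hmono (show (0:ℝ) ∈ Ici (0:ℝ) from Set.mem_Ici.2 le_rfl) (show t ∈ Ici (0:ℝ) from ht) ht
  rw [h0] at this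
  simp only [hf] at this
  linarith

/-- Auxiliary: `4p - 2 ≤ log p - log(1-p)` for `1/2 ≤ p < 1`. -/
lemma aux_log_ineq (p : ℝ) (hp : 1/2 ≤ p) (hp1 : p < 1) :
    4 * p - 2 ≤ Real.log p - Real.log (1 - p) := by
  have hp0 : 0 < p := by linarith
  have h1p : 0 < 1 - p := by linarith
  set t : ℝ := 2 * p - 1 with htdef
  have ht : 0 ≤ t := by simp only [htdef]; linarith
  have hA := aux_exp_ineq t ht
  have h1t : 1 - t = 2 * (1 - p) := by simp only [htdef]; ring
  have h1t' : 1 + t = 2 * p := by simp only [htdef]; ring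
  rw [h1t, h1t'] at hA
  have hkey : (1 - p) * Real.exp (2 * t) ≤ p := by
    have hexp : (0:ℝ) < Real.exp t := Real.exp_pos t
    have := mul_le_mul_of_nonneg_right hA (le_of_lt hexp)
    have e1 : 2 * (1 - p) * Real.exp t * Real.exp t = 2 * ((1 - p) * Real.exp (2*t)) := by
      rw [show (2:ℝ)*t = t + t by ring, Real.exp_add]; ring
    have e2 : 2 * p * Real.exp (-t) * Real.exp t = 2 * p := by
      rw [mul_assoc, ← Real.exp_add]; simp
    rw [e1, e2] at this
    linarith
  have hexp2 : Real.exp (2 * t) ≤ p / (1 - p) := by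
    rw [le_div_iff₀ h1p]
    linarith [hkey]
  have := Real.log_le_log (Real.exp_pos _) hexp2
  rw [Real.log_exp, Real.log_div (ne_of_gt hp0) (ne_of_gt h1p)] at this
  simp only [htdef] at this
  linarith

noncomputable def pinskerG : ℝ → ℝ := fun x =>
  x * Real.log x + (1-x) * Real.log (1-x) + Real.log 2 - (2*x-1)^2/2

lemma pinskerG_hasDeriv (x : ℝ) (hx0 : 0 < x) (hx1 : 0 < 1 - x) :
    HasDerivAt pinskerG (Real.log x - Real.log (1-x) - 2*(2*x-1)) x := by
  have h1 : HasDerivAt (fun y : ℝ => y * Real.log y) (1 * Real.log x + x * x⁻¹) x :=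
    (hasDerivAt_id x).mul (Real.hasDerivAt_log (ne_of_gt hx0))
  have h2 : HasDerivAt (fun y : ℝ => Real.log (1-y)) ((1-x)⁻¹ * (0 - 1)) x :=
    (Real.hasDerivAt_log (ne_of_gt hx1)).comp x
      ((hasDerivAt_const x (1:ℝ)).sub (hasDerivAt_id x))
  have h3 : HasDerivAt (fun y : ℝ => (1-y) * Real.log (1-y))
      ((0 - 1) * Real.log (1-x) + (1-x) * ((1-x)⁻¹ * (0 - 1))) x :=
    ((hasDerivAt_const x (1:ℝ)).sub (hasDerivAt_id x)).mul h2
  have h4 : HasDerivAt (fun y : ℝ => (2*y-1)^2/2)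
      ((↑2 * (2*x-1)^(2-1) * (2*1)) / 2) x := by
    exact (((hasDerivAt_id x).const_mul 2).sub_const 1).pow 2 |>.div_const 2
  have := ((h1.add h3).add_const (Real.log 2)).sub h4
  refine this.congr_deriv ?_
  have hx0' : x ≠ 0 := ne_of_gt hx0
  have hx1' : (1:ℝ) - x ≠ 0 := ne_of_gt hx1
  field_simp
  ring

/-- Core one-variable Pinsker inequality. -/
lemma aux_core (p : ℝ) (hp0 : 0 < p) (hp1 : p < 1) :
    (2*p - 1)^2 / 2 ≤ p * Real.log (2*p) + (1-p) * Real.log (2*(1-p)) := by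
  have h1p : 0 < 1 - p := by linarith
  have hred : p * Real.log (2*p) + (1-p) * Real.log (2*(1-p)) - (2*p-1)^2/2 = pinskerG p := by
    rw [Real.log_mul two_ne_zero (ne_of_gt hp0), Real.log_mul two_ne_zero (ne_of_gt h1p)]
    simp only [pinskerG]; ring
  rw [← sub_nonneg, hred]
  have hsymm : ∀ x : ℝ, pinskerG (1 - x) = pinskerG x := by
    intro x
    simp only [pinskerG, show (1:ℝ) - (1-x) = x by ring]
    ring
  have ghalf : pinskerG (1/2) = 0 := by
    simp only [pinskerG]
    rw [show (1:ℝ) - 1/2 = 1/2 by norm_num, show (1:ℝ)/2 = 2⁻¹ by norm_num, Real.log_inv]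
    ring
  have hmono : MonotoneOn pinskerG (Ico (1/2 : ℝ) 1) := by
    apply monotoneOn_of_deriv_nonneg (convex_Ico _ _)
    · apply ContinuousOn.sub
      apply ContinuousOn.add
      apply ContinuousOn.add
      · refine ContinuousOn.mul continuousOn_id (Real.continuousOn_log.mono ?_)
        intro x hx
        simp only [mem_Ico] at hx
        simp only [mem_compl_iff, mem_singleton_iff]
        intro h; rw [h] at hx; linarith [hx.1]
      · apply ContinuousOn.mul
        · exact (continuous_const.sub continuous_id).continuousOn
        · refine ContinuousOn.comp Real.continuousOn_log
            (continuous_const.sub continuous_id).continuousOn ?_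
          intro x hx
          simp only [mem_Ico] at hx
          simp only [mem_compl_iff, mem_singleton_iff]
          intro h
          have : x = 1 := by
            have : (1:ℝ) - x = 0 := h
            linarith
          linarith [hx.2]
      · exact continuousOn_const
      · exact (Continuous.continuousOn (by continuity))
    · intro x hx
      rw [interior_Ico] at hx
      obtain ⟨hx1, hx2⟩ := hx
      have hx0 : (0:ℝ) < x := by linarith
      have hx1' : (0:ℝ) < 1 - x := by linarith
      exact (pinskerG_hasDeriv x hx0 hx1').differentiableAt.differentiableWithinAt
    · intro x hx
      rw [interior_Ico] at hx
      obtain ⟨hx1, hx2⟩ := hx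
      have hx0 : (0:ℝ) < x := by linarith
      have hx1' : (0:ℝ) < 1 - x := by linarith
      rw [(pinskerG_hasDeriv x hx0 hx1').deriv]
      have := aux_log_ineq x (le_of_lt hx1) hx2
      linarith
  have key : ∀ q : ℝ, 1/2 ≤ q → q < 1 → 0 ≤ pinskerG q := by
    intro q hq hq1
    have := hmono (show (1/2:ℝ) ∈ Ico (1/2:ℝ) 1 by constructor <;> norm_num)
      (show q ∈ Ico (1/2:ℝ) 1 from ⟨hq, hq1⟩) hq
    rw [ghalf] at this
    exact this
  rcases le_or_gt (1/2) p with h | h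
  · exact key p h hp1
  · rw [← hsymm p]
    exact key (1-p) (by linarith) (by linarith)

theorem stmt_3 (a b : ℝ) (ha0 : 0 ≤ a) (ha1 : a ≤ 1) (hb0 : 0 ≤ b) (hb1 : b ≤ 1) :
    (a - b) ^ 2 / (2 * (a + b))
      ≤ a * Real.log (2 * a / (a + b)) + b * Real.log (2 * b / (a + b)) := by
  rcases eq_or_lt_of_le (by linarith : (0:ℝ) ≤ a + b) with hs | hs
  · have ha : a = 0 := by linarith
    have hb : b = 0 := by linarith
    simp [ha, hb]
  · rcases eq_or_lt_of_le hb0 with hb | hb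
    · -- b = 0, a > 0
      have ha : 0 < a := by rw [← hb] at hs; linarith
      rw [← hb]
      have h2a : 2 * a / (a + 0) = 2 := by
        rw [add_zero]; field_simp
      rw [h2a]
      have hlog2 : (1:ℝ)/2 ≤ Real.log 2 := by
        have := Real.log_two_gt_d9
        linarith
      have : (a - 0)^2 / (2 * (a + 0)) = a / 2 := by
        rw [sub_zero, add_zero]; field_simp
      rw [this]
      have : 0 * Real.log (2 * 0 / (a + 0)) = 0 := by ring
      rw [this, add_zero]
      nlinarith
    · rcases eq_or_lt_of_le ha0 with ha | ha
      · -- a = 0, b > 0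
        rw [← ha]
        have h2b : 2 * b / (0 + b) = 2 := by
          rw [zero_add]; field_simp
        rw [h2b]
        have hlog2 : (1:ℝ)/2 ≤ Real.log 2 := by
          have := Real.log_two_gt_d9
          linarith
        have : (0 - b)^2 / (2 * (0 + b)) = b / 2 := by
          rw [zero_sub, zero_add]; field_simp
        rw [this]
        have : 0 * Real.log (2 * 0 / (0 + b)) = 0 := by ring
        rw [this, zero_add]
        nlinarith
      · -- a, b > 0
        set s := a + b with hsdef
        have hp0 : 0 < a / s := div_pos ha hs
        have hp1 : a / s < 1 := by
          rw [div_lt_one hs]; linarith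
        have hcore := aux_core (a/s) hp0 hp1
        have hs0 : s ≠ 0 := ne_of_gt hs
        have e1 : 1 - a/s = b/s := by
          field_simp
          rw [hsdef]; ring
        have e2 : 2 * (a/s) = 2 * a / s := by ring
        have e3 : 2 * (b/s) = 2 * b / s := by ring
        rw [e1, e2, e3] at hcore
        have hmul := mul_le_mul_of_nonneg_left hcore (le_of_lt hs)
        have eL : s * ((2*a/s - 1)^2 / 2) = (a - b)^2 / (2 * s) := by
          rw [hsdef]
          field_simp
          ring
        have eR : s * (a/s * Real.log (2*a/s) + b/s * Real.log (2*b/s))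
            = a * Real.log (2*a/s) + b * Real.log (2*b/s) := by
          field_simp
        rw [eL, eR] at hmul
        exact hmul
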